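/- Let (ι, A, I, z, x) be a GI datum and a, b : ι → ZMod 2. Suppose the operator X_a Z_b commutes with X_{x i} for every i ∈ I and with Z_v for every v : ι → ZMod 2 satisfying v·(x i) = 0 for all i ∈ I. Then there exist ε ∈ {1, −1}, a finite subset S ⊆ I, and v₀ : ι → ZMod 2 with v₀·(x i) = 0 for all i ∈ I, such that X_a Z_b = ε · (∏_{i ∈ S} X_{x i}) · Z_{v₀}. -/

import Mathlib

noncomputable section

/-- The `ZMod 2`-valued dot product `u·v = ∑ j, u j * v j`. -/
def dotp {ι : Type} [Fintype ι] (u v : ι → ZMod 2) : ZMod 2 := ∑ j, u j * v j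

/-- The X-type Pauli operator `X_u`: the permutation matrix with
`(X_u)_{s,t} = 1` iff `s = t + u`. -/
def Xop {ι : Type} [Fintype ι] (u : ι → ZMod 2) :
    Matrix (ι → ZMod 2) (ι → ZMod 2) ℂ :=
  Matrix.of fun s t => if s = t + u then 1 else 0

/-- The Z-type Pauli operator `Z_v`: the diagonal matrix with
`(Z_v)_{s,s} = (-1)^(v·s)`. -/
def Zop {ι : Type} [Fintype ι] (v : ι → ZMod 2) :
    Matrix (ι → ZMod 2) (ι → ZMod 2) ℂ :=
  Matrix.of fun s t => if s = t then (-1 : ℂ) ^ (dotp v s).val else 0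

/-- The standard inner product on the `ι`-qubit Hilbert space `(ι → ZMod 2) → ℂ`. -/
def qInner {ι : Type} [Fintype ι] [DecidableEq ι] (ψ φ : (ι → ZMod 2) → ℂ) : ℂ :=
  ∑ s, (starRingEnd ℂ) (ψ s) * φ s

/-- The subspace of vectors fixed by every operator in a given set of matrices. -/
def fixedSpace {ι : Type} [Fintype ι] [DecidableEq ι]
    (Ms : Set (Matrix (ι → ZMod 2) (ι → ZMod 2) ℂ)) :
    Submodule ℂ ((ι → ZMod 2) → ℂ) :=
  ⨅ M ∈ Ms, LinearMap.ker (Matrix.mulVecLin M - LinearMap.id)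
section helpers
variable {ι : Type} [Fintype ι] [DecidableEq ι]

lemma zmod2_add_self (p : ZMod 2) : p + p = 0 := by revert p; decide

lemma zmod2_cases (p : ZMod 2) : p = 0 ∨ p = 1 := by revert p; decide

lemma fun_add_self (u : ι → ZMod 2) : u + u = 0 := by
  ext j; exact zmod2_add_self (u j)

lemma dotp_zero_right (v : ι → ZMod 2) : dotp v 0 = 0 := by simp [dotp]

lemma neg_one_pow_eq_one_iff (p : ZMod 2) : ((-1 : ℂ) ^ p.val = 1) ↔ p = 0 := by
  have hp : p = 0 ∨ p = 1 := by revert p; decide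
  rcases hp with h | h <;> subst h <;> norm_num [ZMod.val_one]

lemma mulX_apply (M : Matrix (ι → ZMod 2) (ι → ZMod 2) ℂ) (u : ι → ZMod 2) (s t) :
    (M * Xop u) s t = M s (t + u) := by
  simp [Matrix.mul_apply, Xop, mul_ite, Finset.sum_ite_eq']

lemma Xmul_apply (M : Matrix (ι → ZMod 2) (ι → ZMod 2) ℂ) (u : ι → ZMod 2) (s t) :
    (Xop u * M) s t = M (s + u) t := by
  have key : ∀ r : ι → ZMod 2, (s = r + u) ↔ (r = s + u) := by
    intro r
    constructor <;> intro h <;> subst h <;>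
      simp [add_assoc, fun_add_self]
  simp only [Matrix.mul_apply, Xop, Matrix.of_apply]
  simp_rw [key]
  simp [ite_mul, Finset.sum_ite_eq']

lemma mulZ_apply (M : Matrix (ι → ZMod 2) (ι → ZMod 2) ℂ) (v : ι → ZMod 2) (s t) :
    (M * Zop v) s t = M s t * (-1 : ℂ) ^ (dotp v t).val := by
  simp only [Matrix.mul_apply, Zop, Matrix.of_apply, mul_ite, mul_zero]
  rw [Finset.sum_eq_single t]
  · simp
  · intro r _ hr; simp [hr]
  · simp

lemma Zmul_apply (M : Matrix (ι → ZMod 2) (ι → ZMod 2) ℂ) (v : ι → ZMod 2) (s t) :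
    (Zop v * M) s t = (-1 : ℂ) ^ (dotp v s).val * M s t := by
  simp only [Matrix.mul_apply, Zop, Matrix.of_apply, ite_mul, zero_mul]
  rw [Finset.sum_eq_single s]
  · simp
  · intro r _ hr; rw [if_neg (Ne.symm hr)]
  · simp

lemma XZ_apply (a b : ι → ZMod 2) (s t) :
    (Xop a * Zop b) s t = if s = t + a then (-1 : ℂ) ^ (dotp b t).val else 0 := by
  rw [mulZ_apply]
  simp [Xop, ite_mul]

lemma Xop_zero : (Xop (0 : ι → ZMod 2)) = 1 := by
  ext s t; simp [Xop, Matrix.one_apply, eq_comm]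

lemma Xop_mul_Xop (u w : ι → ZMod 2) : Xop u * Xop w = Xop (u + w) := by
  ext s t
  rw [mulX_apply]
  simp [Xop, add_comm, add_assoc, add_left_comm]
end helpers

/-- in a GI datum `(ι, A, I, z, x)`, any operator `X_a Z_b` commuting with
all `X_{x i}` and with every `Z_v` for `v` orthogonal to all `x i` equals
`± (∏_{i ∈ S} X_{x i}) · Z_{v₀}` for some finite `S ⊆ I` and some `v₀` orthogonal to
all `x i`. -/
theorem statement8 (ι A I : Type) [Fintype ι] [DecidableEq ι] [Fintype A] [Fintype I]
    (z : A → ι → ZMod 2) (x : I → ι → ZMod 2)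
    (a b : ι → ZMod 2)
    (h1 : ∀ i, (Xop a * Zop b) * Xop (x i) = Xop (x i) * (Xop a * Zop b))
    (h2 : ∀ v : ι → ZMod 2, (∀ i, dotp v (x i) = 0) →
      (Xop a * Zop b) * Zop v = Zop v * (Xop a * Zop b)) :
    ∃ ε : ℂ, (ε = 1 ∨ ε = -1) ∧
      ∃ (S : Finset I) (v₀ : ι → ZMod 2),
        (∀ i, dotp v₀ (x i) = 0) ∧
        Xop a * Zop b = ε • ((S.toList.map fun i => Xop (x i)).prod * Zop v₀) := by
  classical
  -- Step 1: `b` is orthogonal to every `x i`.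
  have hb : ∀ i, dotp b (x i) = 0 := by
    intro i
    have h := congrArg (fun M : Matrix (ι → ZMod 2) (ι → ZMod 2) ℂ => M (x i + a) 0) (h1 i)
    simp only [mulX_apply, Xmul_apply] at h
    have eL : x i + a + a = 0 + x i := by
      rw [add_assoc, fun_add_self, add_zero, zero_add]
    have eR : x i + a + x i + a = (0 : ι → ZMod 2) := by
      rw [show x i + a + x i + a = (x i + x i) + (a + a) from by ring,
        fun_add_self, fun_add_self, add_zero]
    rw [eL, eR] at h
    simp [Zop, dotp_zero_right] at h
    exact (neg_one_pow_eq_one_iff _).mp h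
  -- Step 2: any `v` orthogonal to all `x i` is orthogonal to `a`.
  have ha : ∀ v : ι → ZMod 2, (∀ i, dotp v (x i) = 0) → dotp v a = 0 := by
    intro v hv
    have h := congrArg (fun M : Matrix (ι → ZMod 2) (ι → ZMod 2) ℂ => M a 0) (h2 v hv)
    simp only [mulZ_apply, Zmul_apply, XZ_apply] at h
    simp [Xop, dotp_zero_right] at h
    exact (neg_one_pow_eq_one_iff _).mp h.symm
  -- Step 3: `a` lies in the span of the `x i`.
  have haspan : a ∈ Submodule.span (ZMod 2) (Set.range x) := by
    by_contra hna
    set W := Submodule.span (ZMod 2) (Set.range x) with hW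
    have hq : W.mkQ a ≠ 0 := by
      simpa [Submodule.mkQ_apply, Submodule.Quotient.mk_eq_zero] using hna
    obtain ⟨f, hf⟩ :=
      not_forall.mp (fun h => hq ((Module.forall_dual_apply_eq_zero_iff (ZMod 2) _).mp h))
    set F : (ι → ZMod 2) →ₗ[ZMod 2] ZMod 2 := f.comp W.mkQ with hFdef
    have hFx : ∀ i, F (x i) = 0 := by
      intro i
      have hmem : x i ∈ W := Submodule.subset_span (Set.mem_range_self i)
      simp [hFdef, Submodule.mkQ_apply, (Submodule.Quotient.mk_eq_zero W).mpr hmem]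
    set v : ι → ZMod 2 := fun j => F (Pi.single j 1 : ι → ZMod 2) with hvdef
    have hdv : ∀ u : ι → ZMod 2, dotp v u = F u := by
      intro u
      have step : ∀ j : ι, v j * u j = F (Pi.single j (u j)) := by
        intro j
        have : Pi.single j (u j) = u j • (Pi.single j 1 : ι → ZMod 2) := by
          ext k
          rcases eq_or_ne k j with hk | hk <;>
            simp [Pi.single_apply, hk, Pi.smul_apply, smul_eq_mul]
        rw [this, map_smul, smul_eq_mul, mul_comm]
      calc dotp v u = ∑ j, F (Pi.single j (u j)) := Finset.sum_congr rfl (fun j _ => step j)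
        _ = F (∑ j, Pi.single j (u j)) := (map_sum F _ _).symm
        _ = F u := by rw [Finset.univ_sum_single]
    have hva : dotp v a = 0 := ha v (fun i => by rw [hdv]; exact hFx i)
    rw [hdv] at hva
    exact hf (by simpa [hFdef] using hva)
  obtain ⟨c, hc⟩ := Submodule.mem_span_range_iff_exists_fun (ZMod 2) |>.mp haspan
  set S : Finset I := Finset.univ.filter (fun i => c i = 1) with hS
  have hsum : ∑ i ∈ S, x i = a := by
    rw [hS, Finset.sum_filter, ← hc]
    apply Finset.sum_congr rfl
    intro i _
    rcases zmod2_cases (c i) with h | h <;> simp [h]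
  have hprod : ∀ l : List I, ((l.map fun i => Xop (x i)).prod) = Xop ((l.map x).sum) := by
    intro l
    induction l with
    | nil => simp [Xop_zero]
    | cons i l ih => simp [ih, Xop_mul_Xop]
  have hXa : ((S.toList.map fun i => Xop (x i)).prod) = Xop a := by
    rw [hprod, Finset.sum_map_toList, hsum]
  exact ⟨1, Or.inl rfl, S, b, hb, by rw [one_smul, hXa]⟩
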